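/- If a clause C is cost-SR with respect to a MaxSAT instance Γ encoded with blocking variables, then C is redundant with respect to Γ, i.e., cost(Γ) = cost(Γ ∪ {C}). -/
import Mathlib


namespace PaperMaxSAT

/-- Variables are natural numbers. -/
abbrev Var := ℕ

/-- A literal is a variable together with a polarity. -/
abbrev Lit := Var × Bool

/-- Negation of a literal. -/
def negLit (l : Lit) : Lit := (l.1, !l.2)

/-- A clause is a finite set of literals. -/
abbrev Clause := Finset Lit

/-- A CNF formula is a finite multiset of clauses. -/
abbrev CNF := Multiset Clause

/-- A tautological clause contains a literal together with its negation. -/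
def isTaut (C : Clause) : Prop := ∃ l ∈ C, negLit l ∈ C

/-- The value of a substitution at a variable: a Boolean constant or a literal. -/
abbrev SubVal := Bool ⊕ Lit

/-- Negation on substitution values. -/
def negSV : SubVal → SubVal
  | .inl b => .inl !b
  | .inr l => .inr (negLit l)

/-- A substitution maps each variable to `0`, `1` or a literal. -/
abbrev Sub := Var → SubVal

/-- Applying a substitution to a literal, respecting `σ(¬x) = ¬σ(x)`. -/
def appLit (σ : Sub) (l : Lit) : SubVal :=
  if l.2 then σ l.1 else negSV (σ l.1)

/-- The identity substitution. -/
def idSub : Sub := fun v => .inr (v, true)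

/-- `σ(C) = 1` : some literal of `C` is mapped to true by `σ`. -/
def clauseTrue (σ : Sub) (C : Clause) : Prop := ∃ l ∈ C, appLit σ l = Sum.inl true

instance (σ : Sub) (C : Clause) : Decidable (clauseTrue σ C) := by
  unfold clauseTrue; infer_instance

/-- `C↾σ` : the clause whose literals are the images under `σ` of the literals
of `C` mapped to literals (literals mapped to `0` are dropped). -/
def restrictClause (σ : Sub) (C : Clause) : Clause :=
  C.biUnion (fun l => match appLit σ l with
    | .inr m => {m}
    | _ => (∅ : Clause))

/-- `Γ↾σ` : restrict every clause of `Γ`; clauses mapped to `1` are removed. -/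
def restrictCNF (σ : Sub) (Γ : CNF) : CNF :=
  (Γ.filter (fun C => ¬ clauseTrue σ C)).map (restrictClause σ)

/-- `σ ⊨ C` : `σ(C) = 1` or `σ(C)` is tautological. -/
def subSat (σ : Sub) (C : Clause) : Prop :=
  clauseTrue σ C ∨ isTaut (restrictClause σ C)

/-- The assignment `¬C`, setting all literals of `C` to false. -/
def negSub (C : Clause) : Sub := fun v =>
  if (v, true) ∈ C then .inl false
  else if (v, false) ∈ C then .inl true
  else .inr (v, true)

/-- The substitution setting the literal `l` to true and touching nothing else. -/
def litSub (l : Lit) : Sub := fun v => if v = l.1 then .inl l.2 else .inr (v, true)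

/-- Unit propagation derives the empty clause. -/
inductive UPFalse : CNF → Prop
  | empty {Γ : CNF} : (∅ : Clause) ∈ Γ → UPFalse Γ
  | step {Γ : CNF} (l : Lit) : ({l} : Clause) ∈ Γ →
      UPFalse (restrictCNF (litSub l) Γ) → UPFalse Γ

/-- The unit clauses `¬l` for `l ∈ C`. -/
def negUnits (C : Clause) : CNF := C.val.map (fun l => ({negLit l} : Clause))

/-- `Γ ⊢₁ C` : unit propagation on `Γ↾¬C` produces the empty clause. -/
def UPimplies (Γ : CNF) (C : Clause) : Prop := UPFalse (Γ + negUnits C)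

/-- `Γ ⊢₁ Δ` : `Γ ⊢₁ D` for every `D ∈ Δ`. -/
def UPimpliesAll (Γ Δ : CNF) : Prop := ∀ D ∈ Δ, UPimplies Γ D

/-- Total assignments. -/
abbrev TAssign := Var → Bool

/-- A total assignment satisfies a clause. -/
def satC (α : TAssign) (C : Clause) : Prop := ∃ l ∈ C, α l.1 = l.2

instance (α : TAssign) (C : Clause) : Decidable (satC α C) := by
  unfold satC; infer_instance

/-- A total assignment satisfies a CNF. -/
def satCNF (α : TAssign) (Γ : CNF) : Prop := ∀ C ∈ Γ, satC α C

/-- `τ ∘ σ` : composition of a total assignment with a substitution. -/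
def comp (τ : TAssign) (σ : Sub) : TAssign := fun v =>
  match σ v with
  | .inl b => b
  | .inr l => if l.2 then τ l.1 else !(τ l.1)

/-- `τ` extends the assignment `¬C`. -/
def extendsNeg (τ : TAssign) (C : Clause) : Prop := ∀ l ∈ C, τ l.1 = !l.2

/-- The cost of a total assignment w.r.t. a set `B` of blocking variables:
the number of blocking variables set to true. -/
def cost (B : Finset Var) (α : TAssign) : ℕ := (B.filter (fun b => α b = true)).card

/-- The cost of a MaxSAT instance encoded with blocking variables `B`:
the minimum cost of a satisfying total assignment. -/
noncomputable def costCNF (B : Finset Var) (Γ : CNF) : ℕ :=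
  sInf {k | ∃ α : TAssign, satCNF α Γ ∧ cost B α = k}

/-- `σ` witnesses that `C` is cost-SR w.r.t. `Γ` (with blocking variables `B`):
the redundancy condition `Γ↾¬C ⊢₁ (Γ ∪ {C})↾σ` and the cost condition. -/
def CostSRwit (B : Finset Var) (Γ : CNF) (C : Clause) (σ : Sub) : Prop :=
  UPimpliesAll (restrictCNF (negSub C) Γ) (restrictCNF σ (C ::ₘ Γ)) ∧
  ∀ τ : TAssign, extendsNeg τ C → cost B (comp τ σ) ≤ cost B τ

/-- `C` is cost-SR w.r.t. `Γ`. -/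
def CostSR (B : Finset Var) (Γ : CNF) (C : Clause) : Prop := ∃ σ, CostSRwit B Γ C σ

/-- A substitution which is an assignment: every value is `0`, `1`,
or the variable itself. -/
def isAssign (σ : Sub) : Prop :=
  ∀ v, σ v = .inl true ∨ σ v = .inl false ∨ σ v = .inr (v, true)

/-- The variables of a clause. -/
def varsClause (C : Clause) : Finset Var := C.image Prod.fst

/-- The variables of a CNF. -/
def varsCNF (Γ : CNF) : Finset Var := (Γ.map varsClause).sup

/-- Membership in the domain of an assignment. -/
def subDom (σ : Sub) (v : Var) : Prop := ∃ b : Bool, σ v = .inl b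

/-- `C` is cost-PR w.r.t. `Γ`: cost-SR witnessed by an assignment. -/
def CostPR (B : Finset Var) (Γ : CNF) (C : Clause) : Prop :=
  ∃ σ, CostSRwit B Γ C σ ∧ isAssign σ

/-- `C` is cost-SPR w.r.t. `Γ`: cost-SR witnessed by an assignment with
domain `dom(¬C) = Var(C)`. -/
def CostSPR (B : Finset Var) (Γ : CNF) (C : Clause) : Prop :=
  ∃ σ, CostSRwit B Γ C σ ∧ isAssign σ ∧ (∀ v, subDom σ v ↔ v ∈ varsClause C)

/-- `C` is cost-LPR w.r.t. `Γ`: cost-SR witnessed by an assignment with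
domain `dom(¬C)` differing from `¬C` on exactly one variable. -/
def CostLPR (B : Finset Var) (Γ : CNF) (C : Clause) : Prop :=
  ∃ σ, CostSRwit B Γ C σ ∧ isAssign σ ∧ (∀ v, subDom σ v ↔ v ∈ varsClause C) ∧
    ((varsClause C).filter (fun v => σ v ≠ negSub C v)).card = 1

/-- `D` is a resolvent of `E₁` and `E₂`. -/
def resolvent (D E₁ E₂ : Clause) : Prop :=
  ∃ x : Var, (x, true) ∈ E₁ ∧ (x, false) ∈ E₂ ∧
    D = E₁.erase (x, true) ∪ E₂.erase (x, false)

/-- A derivation from `Γ` in the calculus with redundancy rule `Red`: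
every clause of the list is in `Γ`, a weakening of an earlier clause,
a resolvent of two earlier clauses, or redundant (w.r.t. `Red`) relative to
`Γ` together with the earlier clauses, using no new variables. -/
def IsDeriv (Red : Finset Var → CNF → Clause → Prop) (B : Finset Var) (Γ : CNF)
    (L : List Clause) : Prop :=
  ∀ i, ∀ hi : i < L.length,
    L[i] ∈ Γ ∨
    (∃ j, ∃ hj : j < i, L[j]'(hj.trans hi) ⊆ L[i]) ∨
    (∃ j k, ∃ hj : j < i, ∃ hk : k < i,
      resolvent L[i] (L[j]'(hj.trans hi)) (L[k]'(hk.trans hi))) ∨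
    (Red B (Γ + (↑(L.take i) : CNF)) L[i] ∧ varsClause L[i] ⊆ varsCNF Γ)

/-- `C ∨ ℓ` is a cost blocked clause (cost-BC) w.r.t. `Γ` and `ℓ`. -/
def CostBC (B : Finset Var) (Γ : CNF) (C : Clause) (l : Lit) : Prop :=
  (∀ D ∈ Γ, negLit l ∈ D → isTaut (C ∪ D.erase (negLit l))) ∧
  ¬(l.2 = true ∧ l.1 ∈ B)

/-- Hamming distance between two total assignments, over the variables in `V`. -/
def HD (V : Finset Var) (α β : TAssign) : ℕ := (V.filter (fun v => α v ≠ β v)).card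

/-- `flip(C, σ) ≥ d` : some total assignment `τ` extending `¬C` has
Hamming distance (over `V`) at least `d` from `τ ∘ σ`. -/
def flipGE (V : Finset Var) (C : Clause) (σ : Sub) (d : ℕ) : Prop :=
  ∃ τ : TAssign, extendsNeg τ C ∧ d ≤ HD V τ (comp τ σ)
section Aux

/-- Key literal lemma. -/
lemma comp_lit_iff (α : TAssign) (σ : Sub) (l : Lit) :
    (comp α σ) l.1 = l.2 ↔
      (appLit σ l = .inl true ∨ ∃ m : Lit, appLit σ l = .inr m ∧ α m.1 = m.2) := by
  obtain ⟨v, b⟩ := l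
  unfold comp appLit negSV
  cases hv : σ v with
  | inl c =>
    cases b <;> cases c <;> simp
  | inr m =>
    obtain ⟨w, d⟩ := m
    cases b <;> cases d <;> simp [negLit] <;>
      constructor <;> intro h' <;> simp_all

lemma mem_restrictClause {σ : Sub} {C : Clause} {m : Lit} :
    m ∈ restrictClause σ C ↔ ∃ l ∈ C, appLit σ l = .inr m := by
  unfold restrictClause
  simp only [Finset.mem_biUnion]
  constructor
  · rintro ⟨l, hl, hm⟩
    refine ⟨l, hl, ?_⟩
    rcases h : appLit σ l with c | n <;> simp [h] at hm <;> simp_all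
  · rintro ⟨l, hl, hm⟩
    exact ⟨l, hl, by simp [hm]⟩

/-- Lemma B. -/
lemma satC_comp_iff (α : TAssign) (σ : Sub) (C : Clause) :
    satC (comp α σ) C ↔ clauseTrue σ C ∨ satC α (restrictClause σ C) := by
  constructor
  · rintro ⟨l, hl, hval⟩
    rcases (comp_lit_iff α σ l).1 hval with h1 | ⟨m, hm, hαm⟩
    · exact Or.inl ⟨l, hl, h1⟩
    · exact Or.inr ⟨m, mem_restrictClause.2 ⟨l, hl, hm⟩, hαm⟩
  · rintro (⟨l, hl, h1⟩ | ⟨m, hm, hαm⟩)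
    · exact ⟨l, hl, (comp_lit_iff α σ l).2 (Or.inl h1)⟩
    · obtain ⟨l, hl, hm⟩ := mem_restrictClause.1 hm
      exact ⟨l, hl, (comp_lit_iff α σ l).2 (Or.inr ⟨m, hm, hαm⟩)⟩

lemma mem_restrictCNF {σ : Sub} {Γ : CNF} {D : Clause} :
    D ∈ restrictCNF σ Γ ↔ ∃ E ∈ Γ, ¬ clauseTrue σ E ∧ D = restrictClause σ E := by
  unfold restrictCNF
  simp only [Multiset.mem_map, Multiset.mem_filter]
  constructor
  · rintro ⟨E, ⟨hE, hnt⟩, rfl⟩; exact ⟨E, hE, hnt, rfl⟩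
  · rintro ⟨E, hE, hnt, rfl⟩; exact ⟨E, ⟨hE, hnt⟩, rfl⟩

lemma satCNF_restrict_of_comp {α : TAssign} {σ : Sub} {Γ : CNF}
    (h : satCNF (comp α σ) Γ) : satCNF α (restrictCNF σ Γ) := by
  intro D hD
  obtain ⟨E, hE, hnt, rfl⟩ := mem_restrictCNF.1 hD
  rcases (satC_comp_iff α σ E).1 (h E hE) with h1 | h2
  · exact absurd h1 hnt
  · exact h2

lemma satCNF_comp_of_restrict {α : TAssign} {σ : Sub} {Γ : CNF}
    (h : satCNF α (restrictCNF σ Γ)) : satCNF (comp α σ) Γ := by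
  intro E hE
  by_cases hnt : clauseTrue σ E
  · exact (satC_comp_iff α σ E).2 (Or.inl hnt)
  · exact (satC_comp_iff α σ E).2
      (Or.inr (h _ (mem_restrictCNF.2 ⟨E, hE, hnt, rfl⟩)))

lemma comp_litSub {α : TAssign} {l : Lit} (h : α l.1 = l.2) :
    comp α (litSub l) = α := by
  funext v
  unfold comp litSub
  by_cases hv : v = l.1 <;> simp [hv, ← h]

lemma comp_negSub {α : TAssign} {C : Clause} (h : extendsNeg α C) :
    comp α (negSub C) = α := by
  funext v
  unfold comp negSub
  by_cases h1 : (v, true) ∈ C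
  · rw [if_pos h1]
    simpa using (h _ h1).symm
  · rw [if_neg h1]
    by_cases h2 : (v, false) ∈ C
    · rw [if_pos h2]
      simpa using (h _ h2).symm
    · rw [if_neg h2]; simp

/-- Soundness of unit propagation refutation. -/
lemma UPFalse_sound {Γ : CNF} (h : UPFalse Γ) : ∀ α : TAssign, ¬ satCNF α Γ := by
  induction h with
  | empty hmem =>
    intro α hsat
    obtain ⟨l, hl, -⟩ := hsat _ hmem
    exact absurd hl (by simp)
  | step l hmem _ ih =>
    intro α hsat
    obtain ⟨m, hm, hml⟩ := hsat _ hmem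
    simp only [Finset.mem_singleton] at hm
    subst hm
    refine ih α ?_
    have := comp_litSub (l := m) hml
    exact satCNF_restrict_of_comp (by rw [this]; exact hsat)

lemma satCNF_negUnits {α : TAssign} {C : Clause} (h : extendsNeg α C) :
    satCNF α (negUnits C) := by
  intro D hD
  obtain ⟨l, hl, rfl⟩ := Multiset.mem_map.1 hD
  exact ⟨negLit l, Finset.mem_singleton_self _, by simpa [negLit] using h l hl⟩

/-- Main model-transformation lemma. -/
lemma exists_model (B : Finset Var) {Γ : CNF} {C : Clause} {σ : Sub}
    (hw : CostSRwit B Γ C σ) {α : TAssign} (hα : satCNF α Γ) :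
    ∃ β : TAssign, satCNF β (C ::ₘ Γ) ∧ cost B β ≤ cost B α := by
  by_cases hC : satC α C
  · refine ⟨α, ?_, le_rfl⟩
    intro D hD
    rcases Multiset.mem_cons.1 hD with rfl | hD
    · exact hC
    · exact hα D hD
  · have hext : extendsNeg α C := by
      intro l hl
      cases hb : α l.1
      · cases h2 : l.2
        · exact absurd ⟨l, hl, by rw [hb, h2]⟩ hC
        · rfl
      · cases h2 : l.2
        · rfl
        · exact absurd ⟨l, hl, by rw [hb, h2]⟩ hC
    obtain ⟨hUP, hcost⟩ := hw
    refine ⟨comp α σ, ?_, hcost α hext⟩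
    -- α satisfies Γ↾¬C
    have hres : satCNF α (restrictCNF (negSub C) Γ) :=
      satCNF_restrict_of_comp (by rw [comp_negSub hext]; exact hα)
    intro D hD
    by_cases hnt : clauseTrue σ D
    · exact (satC_comp_iff α σ D).2 (Or.inl hnt)
    · have hDmem : restrictClause σ D ∈ restrictCNF σ (C ::ₘ Γ) :=
        mem_restrictCNF.2 ⟨D, hD, hnt, rfl⟩
      have hup := hUP _ hDmem
      have hnot := UPFalse_sound hup α
      have : ¬ satCNF α (negUnits (restrictClause σ D)) := by
        intro hn
        refine hnot ?_
        intro E hE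
        rcases Multiset.mem_add.1 hE with hE | hE
        · exact hres E hE
        · exact hn E hE
      have : ¬ extendsNeg α (restrictClause σ D) := fun he => this (satCNF_negUnits he)
      rw [extendsNeg] at this
      push_neg at this
      obtain ⟨m, hm, hmv⟩ := this
      have : α m.1 = m.2 := by
        cases h2 : m.2 <;> cases hb : α m.1 <;> simp_all
      exact (satC_comp_iff α σ D).2 (Or.inr ⟨m, hm, this⟩)

end Aux


/-- if `C` is cost-SR w.r.t. `Γ`, then `C` is redundant
w.r.t. `Γ`, i.e. `cost(Γ) = cost(Γ ∪ {C})`. -/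
theorem costSR_is_redundant (B : Finset Var) (Γ : CNF) (C : Clause)
    (h : CostSR B Γ C) :
    costCNF B Γ = costCNF B (C ::ₘ Γ) := by
  obtain ⟨σ, hw⟩ := h
  unfold costCNF
  set S := {k | ∃ α : TAssign, satCNF α Γ ∧ cost B α = k} with hS
  set S' := {k | ∃ α : TAssign, satCNF α (C ::ₘ Γ) ∧ cost B α = k} with hS'
  have hsub : S' ⊆ S := by
    rintro k ⟨α, hα, rfl⟩
    exact ⟨α, fun D hD => hα D (Multiset.mem_cons_of_mem hD), rfl⟩
  by_cases hne : S.Nonempty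
  · obtain ⟨α, hα, hcost⟩ := Nat.sInf_mem hne
    obtain ⟨β, hβ, hle⟩ := exists_model B hw hα
    have h1 : sInf S' ≤ sInf S := by
      calc sInf S' ≤ cost B β := Nat.sInf_le ⟨β, hβ, rfl⟩
        _ ≤ cost B α := hle
        _ = sInf S := hcost
    have h2 : sInf S ≤ sInf S' :=
      Nat.sInf_le (hsub (Nat.sInf_mem ⟨cost B β, β, hβ, rfl⟩))
    exact le_antisymm h2 h1
  · have he : S = ∅ := Set.not_nonempty_iff_eq_empty.1 hne
    have he' : S' = ∅ := Set.eq_empty_of_subset_empty (he ▸ hsub)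
    rw [he, he']

end PaperMaxSAT
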